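/- For any real numbers v_1, …, v_{n+1} and any α ∈ (0,1): v_{n+1} ≤ Quantile(α; {v_1, …, v_n} ∪ {+∞}) if and only if v_{n+1} ≤ Quantile(α; {v_1, …, v_{n+1}}). That is, replacing the (n+1)-st sample value by +∞ does not change whether the (n+1)-st value lies below the α-quantile of the size-(n+1) sample. -/

import Mathlib

open MeasureTheory

/-- The empirical `α`-quantile of a finite multiset `S` of values in `ℝ ∪ {+∞}`:
the `⌈α · |S|⌉`-th smallest element of `S`, counted with multiplicity. -/
noncomputable def empQuantile (α : ℝ) (S : Multiset (WithTop ℝ)) : WithTop ℝ :=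
  (S.sort (· ≤ ·)).getD (⌈α * (S.card : ℝ)⌉.toNat - 1) ⊤

private lemma le_getD_of_forall {x : WithTop ℝ} {s : List (WithTop ℝ)}
    (h : ∀ a ∈ s, x ≤ a) (k : ℕ) : x ≤ s.getD k ⊤ := by
  by_cases hk : k < s.length
  · rw [List.getD_eq_getElem _ _ hk]
    exact h _ (s.getElem_mem hk)
  · rw [List.getD_eq_default _ _ (le_of_not_gt hk)]
    exact le_top

private lemma key_lemma {x y : WithTop ℝ} (hxy : x ≤ y) :
    ∀ (s : List (WithTop ℝ)), s.Pairwise (· ≤ ·) → ∀ k,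
      (x ≤ s.getD k ⊤ ↔ x ≤ (s.orderedInsert (· ≤ ·) y).getD k ⊤)
  | [], _, k => by
    simp only [List.orderedInsert]
    constructor
    · intro _
      exact le_getD_of_forall (by intro a ha; simp at ha; subst ha; exact hxy) k
    · intro _
      exact le_getD_of_forall (by simp) k
  | a :: t, hs, k => by
    simp only [List.orderedInsert]
    by_cases hya : y ≤ a
    · rw [if_pos hya]
      have hall : ∀ b ∈ a :: t, x ≤ b := by
        intro b hb
        rcases List.mem_cons.mp hb with rfl | hb
        · exact hxy.trans hya
        · exact hxy.trans (hya.trans ((List.pairwise_cons.mp hs).1 _ hb))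
      constructor
      · intro _
        exact le_getD_of_forall (by
          intro b hb
          rcases List.mem_cons.mp hb with rfl | hb
          · exact hxy
          · exact hall _ hb) k
      · intro _
        exact le_getD_of_forall hall k
    · rw [if_neg hya]
      cases k with
      | zero => simp
      | succ j =>
        simpa using key_lemma hxy t hs.of_cons j

private lemma sort_cons' (a : WithTop ℝ) (s : Multiset (WithTop ℝ)) :
    Multiset.sort (a ::ₘ s) (· ≤ ·) =
      (Multiset.sort s (· ≤ ·)).orderedInsert (· ≤ ·) a := by
  refine (fun h1 h2 h3 => List.Perm.eq_of_pairwise' (r := (· ≤ ·)) h2 h3 h1) ?_ ?_ ?_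
  · have h1 : (↑(Multiset.sort (a ::ₘ s) (· ≤ ·)) : Multiset (WithTop ℝ)) =
        ↑(a :: Multiset.sort s (· ≤ ·)) := by
      rw [Multiset.sort_eq, ← Multiset.cons_coe, Multiset.sort_eq]
    exact (Multiset.coe_eq_coe.mp h1).trans (List.perm_orderedInsert _ _ _).symm
  · exact Multiset.pairwise_sort _ _
  · exact List.Pairwise.orderedInsert a _ (Multiset.pairwise_sort s (· ≤ ·))

/-- For reals `v 0, …, v n` and `α ∈ (0,1)`:
`v_{n+1} ≤ Quantile(α; {v_1,…,v_n} ∪ {+∞})` iff `v_{n+1} ≤ Quantile(α; {v_1,…,v_{n+1}})`. -/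
theorem quantile_inflate_last_iff
    {n : ℕ} (v : Fin (n + 1) → ℝ) (α : ℝ) (hα : α ∈ Set.Ioo (0 : ℝ) 1) :
    (((v (Fin.last n) : ℝ) : WithTop ℝ) ≤
        empQuantile α
          ((⊤ : WithTop ℝ) ::ₘ
            ((Finset.univ : Finset (Fin n)).val.map
              fun i => ((v i.castSucc : ℝ) : WithTop ℝ)))) ↔
      (((v (Fin.last n) : ℝ) : WithTop ℝ) ≤
        empQuantile α
          ((Finset.univ : Finset (Fin (n + 1))).val.map
            fun i => ((v i : ℝ) : WithTop ℝ))) := by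
  set f : Fin (n + 1) → WithTop ℝ := fun i => ((v i : ℝ) : WithTop ℝ) with hf
  set M : Multiset (WithTop ℝ) :=
    (Finset.univ : Finset (Fin n)).val.map (fun i => f i.castSucc) with hM
  have hB : ((Finset.univ : Finset (Fin (n + 1))).val.map f) = f (Fin.last n) ::ₘ M := by
    rw [hM, Fin.univ_castSuccEmb, Finset.cons_val, Multiset.map_cons, Finset.map_val,
      Multiset.map_map]
    rfl
  have hcard : ((⊤ : WithTop ℝ) ::ₘ M).card = ((f (Fin.last n) ::ₘ M)).card := by simp
  rw [hB]
  unfold empQuantile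
  rw [hcard, sort_cons', sort_cons']
  exact (key_lemma le_top _ (Multiset.pairwise_sort _ _) _).symm.trans
    (key_lemma le_rfl _ (Multiset.pairwise_sort _ _) _)
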